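/- A free product of finitely many groups, each of which is finite or virtually (infinite) cyclic, contains a normal free subgroup of finite index. In particular, such a free product is virtually free and contains a torsion-free normal subgroup of finite index. -/

import Mathlib

/-- A monoid is torsion-free if no nontrivial element has finite order
(the definition of `Monoid.IsTorsionFree` in the older Mathlib). -/
def Monoid.IsTorsionFree (G : Type*) [Monoid G] : Prop :=
  ∀ g : G, g ≠ 1 → ¬IsOfFinOrder g

-- aux: Multiplicative ℤ is free
lemma isFreeGroup_multiplicative_int : IsFreeGroup (Multiplicative ℤ) := by
  refine IsFreeGroup.ofUniqueLift Unit (fun _ => Multiplicative.ofAdd 1) ?_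
  intro H _ f
  refine ⟨zpowersHom H (f ()), fun _ => by simp [zpowersHom_apply], ?_⟩
  intro F hF
  refine MonoidHom.ext_mint ?_
  rw [hF ()]
  simp [zpowersHom_apply]

lemma isFreeGroup_zpowers {G : Type*} [Group G] {g : G} (hg : ¬ IsOfFinOrder g) :
    IsFreeGroup (Subgroup.zpowers g) := by
  haveI := isFreeGroup_multiplicative_int
  have hinj : Function.Injective (fun n : ℤ => g ^ n) :=
    injective_zpow_iff_not_isOfFinOrder.mpr hg
  let ψ : Multiplicative ℤ →* ↥(Subgroup.zpowers g) :=
    (zpowersHom G g).codRestrict _ (fun n => ⟨n.toAdd, rfl⟩)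
  have hb : Function.Bijective ψ := by
    constructor
    · intro a b hab
      have : g ^ a.toAdd = g ^ b.toAdd := congrArg Subtype.val hab
      exact hinj this
    · rintro ⟨x, hx⟩
      obtain ⟨k, hk⟩ := Subgroup.mem_zpowers_iff.mp hx
      exact ⟨Multiplicative.ofAdd k, Subtype.ext hk⟩
  exact IsFreeGroup.ofMulEquiv (MulEquiv.ofBijective ψ hb)



lemma isFreeGroup_bot {G : Type} [Group G] : IsFreeGroup (⊥ : Subgroup G) := by
  refine IsFreeGroup.ofUniqueLift Empty (fun e => e.elim) ?_
  intro H _ f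
  refine ⟨1, fun a => a.elim, ?_⟩
  intro F _
  ext ⟨x, hx⟩
  obtain rfl : x = 1 := Subgroup.mem_bot.mp hx
  have : (⟨1, hx⟩ : (⊥ : Subgroup G)) = 1 := Subtype.ext rfl
  rw [this, map_one, map_one]

-- finite free groups are trivial
lemma subsingleton_of_isFreeGroup_finite (H : Type*) [Group H] [IsFreeGroup H] [Finite H] :
    Subsingleton H := by
  rcases isEmpty_or_nonempty (IsFreeGroup.Generators H) with hemp | hne
  · constructor
    intro a b
    have h1 : (MonoidHom.id H) = (1 : H →* H) :=
      IsFreeGroup.ext_hom (fun a => hemp.elim a)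
    have ha := DFunLike.congr_fun h1 a
    have hb := DFunLike.congr_fun h1 b
    simp only [MonoidHom.id_apply, MonoidHom.one_apply] at ha hb
    rw [ha, hb]
  · exfalso
    obtain ⟨a⟩ := hne
    let f : H →* Multiplicative ℤ := IsFreeGroup.lift (fun _ => Multiplicative.ofAdd 1)
    have h1 : IsOfFinOrder (IsFreeGroup.of a : H) := isOfFinOrder_of_finite _
    have h2 : IsOfFinOrder (f (IsFreeGroup.of a)) := f.isOfFinOrder h1
    rw [IsFreeGroup.lift_of] at h2
    obtain ⟨n, hn, hpow⟩ := isOfFinOrder_iff_pow_eq_one.mp h2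
    have : (n : ℤ) • (1 : ℤ) = 0 := by
      have := congrArg Multiplicative.toAdd hpow
      simpa using this
    simp at this
    omega

lemma isTorsionFree_of_isFreeGroup {H : Type*} [Group H] [IsFreeGroup H] :
    Monoid.IsTorsionFree H := by
  intro g hg hfin
  haveI : Finite (Subgroup.zpowers g) := by
    have := hfin.finite_zpowers
    exact this.to_subtype
  haveI : IsFreeGroup (Subgroup.zpowers g) := inferInstance
  haveI := subsingleton_of_isFreeGroup_finite (Subgroup.zpowers g)
  have : (⟨g, Subgroup.mem_zpowers g⟩ : Subgroup.zpowers g) = 1 := Subsingleton.elim _ _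
  exact hg (by simpa using congrArg Subtype.val this)


noncomputable section

open Monoid CategoryTheory ActionCategory SingleObj Quiver
open scoped Classical
set_option linter.unusedSectionVars false

namespace FPVF

variable {ι : Type} {G : ι → Type} [∀ i, Group (G i)]
variable (N : Subgroup (Monoid.CoprodI G))

abbrev A := Monoid.CoprodI G ⧸ N

/-- intersection of `N` with the factor `G i`. -/
abbrev Kk (i : ι) : Subgroup (G i) := N.comap Monoid.CoprodI.of

variable [N.Normal]

lemma smul_eq_iff_mem (i : ι) (g : G i) (a : A N) :
    (Monoid.CoprodI.of g) • a = a ↔ g ∈ Kk N i := by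
  obtain ⟨γ, rfl⟩ := QuotientGroup.mk_surjective a
  rw [MulAction.Quotient.smul_mk, smul_eq_mul, QuotientGroup.eq]
  have h1 : (Monoid.CoprodI.of g * γ)⁻¹ * γ = γ⁻¹ * ((Monoid.CoprodI.of g)⁻¹ * γ) := by
    group
  rw [h1, (inferInstance : N.Normal).mem_comm_iff]
  have h2 : (Monoid.CoprodI.of g)⁻¹ * γ * γ⁻¹ = (Monoid.CoprodI.of g)⁻¹ := by group
  rw [h2, N.inv_mem_iff]
  rfl

/-- the orbit relation for the action of `G i` on `A N`. -/
def relS (i : ι) : Setoid (A N) :=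
  ⟨fun a b => ∃ g : G i, (Monoid.CoprodI.of g) • a = b,
    fun a => ⟨1, by simp⟩,
    fun {a b} ⟨g, hg⟩ => ⟨g⁻¹, by rw [← hg, map_inv, inv_smul_smul]⟩,
    fun {a b c} ⟨g, hg⟩ ⟨h, hh⟩ => ⟨h * g, by rw [map_mul, mul_smul, hg, hh]⟩⟩

/-- base point of the `G i` orbit of `a`. -/
def bp (i : ι) (a : A N) : A N := (Quotient.mk (relS N i) a).out

lemma bp_rel (i : ι) (a : A N) : ∃ g : G i, (Monoid.CoprodI.of g) • bp N i a = a :=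
  Quotient.exact (Quotient.out_eq (Quotient.mk (relS N i) a))

lemma bp_eq_of_rel {i : ι} {a b : A N} (g : G i) (h : (Monoid.CoprodI.of g) • a = b) :
    bp N i a = bp N i b :=
  congrArg Quotient.out (Quotient.sound ⟨g, h⟩)

lemma bp_idem (i : ι) (a : A N) : bp N i (bp N i a) = bp N i a := by
  obtain ⟨g, hg⟩ := bp_rel N i a
  exact bp_eq_of_rel N g hg

lemma bp_smul (i : ι) (g : G i) (a : A N) :
    bp N i ((Monoid.CoprodI.of g) • a) = bp N i a :=
  (bp_eq_of_rel N g rfl).symm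

lemma bp_inv_smul (i : ι) (g : G i) (a : A N) :
    bp N i ((Monoid.CoprodI.of g)⁻¹ • a) = bp N i a := by
  rw [← map_inv, bp_smul]

/-- chosen group element carrying the base point of the orbit of `a` to `a`;
equal to `1` if `a` is the base point. -/
def ch (i : ι) (a : A N) : G i :=
  if h : a = bp N i a then 1 else (bp_rel N i a).choose

lemma ch_spec (i : ι) (a : A N) : (Monoid.CoprodI.of (ch N i a)) • bp N i a = a := by
  unfold ch
  split_ifs with h
  · simp [← h]
  · exact (bp_rel N i a).choose_spec

lemma ch_bp {i : ι} {a : A N} (h : a = bp N i a) : ch N i a = 1 := by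
  unfold ch
  exact dif_pos h

lemma inv_ch_smul (i : ι) (a : A N) :
    (Monoid.CoprodI.of (ch N i a))⁻¹ • a = bp N i a := by
  rw [inv_smul_eq_iff, ch_spec]

/-- the `K i`-component of `g` as a morphism into the point `b`. -/
def kel (i : ι) (g : G i) (b : A N) : G i :=
  (ch N i b)⁻¹ * g * ch N i ((Monoid.CoprodI.of g)⁻¹ • b)

lemma kel_mem (i : ι) (g : G i) (b : A N) : kel N i g b ∈ Kk N i := by
  rw [← smul_eq_iff_mem N i _ (bp N i b)]
  unfold kel
  rw [map_mul, map_mul, map_inv, mul_smul, mul_smul]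
  have h1 : bp N i b = bp N i ((Monoid.CoprodI.of g)⁻¹ • b) := (bp_inv_smul N i g b).symm
  rw [h1, ch_spec, ← h1]
  rw [smul_inv_smul]
  exact inv_ch_smul N i b

lemma kel_mul (i : ι) (g h : G i) (b : A N) :
    kel N i (g * h) b = kel N i g b * kel N i h ((Monoid.CoprodI.of g)⁻¹ • b) := by
  have h1 : (Monoid.CoprodI.of (g * h))⁻¹ • b
      = (Monoid.CoprodI.of h)⁻¹ • ((Monoid.CoprodI.of g)⁻¹ • b) := by
    rw [map_mul, mul_inv_rev, mul_smul]
  unfold kel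
  rw [h1]
  group

lemma kel_one (i : ι) (b : A N) : kel N i 1 b = 1 := by
  unfold kel
  rw [map_one, inv_one, one_smul]
  group


variable [∀ i, IsFreeGroup ↥(Kk N i)]

/-- generating quiver arrows for the action groupoid. -/
def Gen (a b : ActionCategory (Monoid.CoprodI G) (A N)) : Type :=
  Σ i : ι,
    (PLift (a.back = bp N i a.back ∧
      (∃ g : G i, Monoid.CoprodI.of g • a.back = b.back) ∧ b.back ≠ a.back)) ⊕
    { _e : IsFreeGroup.Generators ↥(Kk N i) // a.back = bp N i a.back ∧ b = a }

/-- the morphism associated to a generating arrow. -/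
def genOf {a b : ActionCategory (Monoid.CoprodI G) (A N)} : Gen N a b → (a ⟶ b)
  | ⟨i, Sum.inl h⟩ => Subtype.mk (Monoid.CoprodI.of (ch N i b.back)) (by
      obtain ⟨h1, ⟨g, hg⟩, h3⟩ := h.down
      have hb : bp N i b.back = a.back := by rw [← bp_eq_of_rel N g hg, ← h1]
      show Monoid.CoprodI.of (ch N i b.back) • a.back = b.back
      rw [show a.back = bp N i b.back from hb.symm]
      exact ch_spec N i b.back)
  | ⟨i, Sum.inr e⟩ => Subtype.mk
      (Monoid.CoprodI.of ((IsFreeGroup.of e.val : ↥(Kk N i)) : G i)) (by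
      have h2 := e.property.2
      subst h2
      exact (smul_eq_iff_mem N i _ _).mpr (IsFreeGroup.of e.val).2)

/-- object of the action category attached to a point. -/
def obj (x : A N) : ActionCategory (Monoid.CoprodI G) (A N) := ⟨⟨⟩, x⟩

instance genQuiver :
    Quiver (IsFreeGroupoid.Generators (ActionCategory (Monoid.CoprodI G) (A N))) :=
  ⟨fun a b => Gen N a b⟩

section Labelled

variable {X : Type} [Group X]
variable (f : Quiver.Labelling
  (IsFreeGroupoid.Generators (ActionCategory (Monoid.CoprodI G) (A N))) X)

/-- label of the tree arrow from the base point of the orbit. -/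
def Tval (i : ι) (x y : A N) : X :=
  if h : x = bp N i x ∧ (∃ g : G i, Monoid.CoprodI.of g • x = y) ∧ y ≠ x then
    f (a := obj N x) (b := obj N y) ⟨i, Sum.inl ⟨⟨h.1, h.2.1, h.2.2⟩⟩⟩
  else 1

/-- the hom out of the stabilizer determined by the labels of the loop arrows. -/
def Wval (i : ι) (x : A N) : ↥(Kk N i) →* X :=
  IsFreeGroup.lift (fun e =>
    if h : x = bp N i x then f (a := obj N x) (b := obj N x) ⟨i, Sum.inr ⟨e, h, rfl⟩⟩
    else 1)

/-- the cocycle associated to the labelling. -/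
def psi (i : ι) (g : G i) : A N → X := fun b =>
  Tval N f i (bp N i b) b * Wval N f i (bp N i b) ⟨kel N i g b, kel_mem N i g b⟩ *
    (Tval N f i (bp N i b) ((Monoid.CoprodI.of g)⁻¹ • b))⁻¹

lemma psi_mul (i : ι) (g h : G i) (b : A N) :
    psi N f i (g * h) b = psi N f i g b * psi N f i h ((Monoid.CoprodI.of g)⁻¹ • b) := by
  have hbp : bp N i ((Monoid.CoprodI.of g)⁻¹ • b) = bp N i b := bp_inv_smul N i g b
  have hkel : (⟨kel N i (g * h) b, kel_mem N i (g * h) b⟩ : ↥(Kk N i)) =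
      ⟨kel N i g b, kel_mem N i g b⟩ *
        ⟨kel N i h ((Monoid.CoprodI.of g)⁻¹ • b),
          kel_mem N i h ((Monoid.CoprodI.of g)⁻¹ • b)⟩ :=
    Subtype.ext (kel_mul N i g h b)
  have hsm : (Monoid.CoprodI.of (g * h))⁻¹ • b
      = (Monoid.CoprodI.of h)⁻¹ • ((Monoid.CoprodI.of g)⁻¹ • b) := by
    rw [map_mul, mul_inv_rev, mul_smul]
  unfold psi
  rw [hbp, hkel, map_mul, hsm]
  group

/-- the lift of the labelling to a factor. -/
def phi (i : ι) : G i →* ((A N → X) ⋊[mulAutArrow] Monoid.CoprodI G) where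
  toFun g := ⟨psi N f i g, Monoid.CoprodI.of g⟩
  map_one' := by
    refine SemidirectProduct.ext ?_ ?_
    · show psi N f i 1 = 1
      funext b
      have h1 : (⟨kel N i 1 b, kel_mem N i 1 b⟩ : ↥(Kk N i)) = 1 :=
        Subtype.ext (kel_one N i b)
      show psi N f i 1 b = 1
      unfold psi
      rw [h1, map_one, map_one, inv_one, one_smul]
      group
    · show Monoid.CoprodI.of (1 : G i) = 1
      exact map_one _
  map_mul' g h := by
    refine SemidirectProduct.ext (funext fun b => ?_) ?_
    · show psi N f i (g * h) b
        = psi N f i g b * psi N f i h ((Monoid.CoprodI.of g)⁻¹ • b)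
      exact psi_mul N f i g h b
    · show Monoid.CoprodI.of (g * h) = Monoid.CoprodI.of g * Monoid.CoprodI.of h
      exact map_mul _ _ _

end Labelled

instance isFreeGroupoidAction :
    IsFreeGroupoid (ActionCategory (Monoid.CoprodI G) (A N)) where
  quiverGenerators := genQuiver N
  of := genOf N
  unique_lift := by
    intro X _ f
    let F' : Monoid.CoprodI G →* ((A N → X) ⋊[mulAutArrow] Monoid.CoprodI G) :=
      Monoid.CoprodI.lift (fun i => phi N f i)
    have sane : ∀ γ, (F' γ).right = γ := by
      suffices h : (SemidirectProduct.rightHom.comp F') = MonoidHom.id _ by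
        exact fun γ => DFunLike.congr_fun h γ
      refine Monoid.CoprodI.ext_hom _ _ (fun i => ?_)
      ext g
      show (F' (Monoid.CoprodI.of g)).right = Monoid.CoprodI.of g
      rw [show F' (Monoid.CoprodI.of g) = phi N f i g from Monoid.CoprodI.lift_of _ _]
      rfl
    have hexist : ∀ (a b) (e : a ⟶ b),
        (uncurry F' sane).map (genOf N e) = f e := by
      intro a b e
      obtain ⟨i, e | e⟩ := e
      · obtain ⟨⟨h1, h2, h3⟩⟩ := e
        set x := ActionCategory.back (M := Monoid.CoprodI G) a with hxdef
        set y := ActionCategory.back (M := Monoid.CoprodI G) b with hydef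
        have e2 : F' (Monoid.CoprodI.of (ch N i y)) = phi N f i (ch N i y) :=
          Monoid.CoprodI.lift_of _ _
        have e1 : (uncurry F' sane).map
              (genOf N ⟨i, Sum.inl ⟨⟨h1, h2, h3⟩⟩⟩) = psi N f i (ch N i y) y := by
          show (F' (Monoid.CoprodI.of (ch N i y))).left y = _
          rw [e2]; rfl
        rw [e1]
        have hyx : bp N i y = x := by
          obtain ⟨g0, hg0⟩ := h2
          rw [← bp_eq_of_rel N g0 hg0, ← h1]
        have hkel : (⟨kel N i (ch N i y) y, kel_mem N i (ch N i y) y⟩ : ↥(Kk N i)) = 1 := by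
          refine Subtype.ext ?_
          show kel N i (ch N i y) y = 1
          unfold kel
          rw [inv_ch_smul, ch_bp N (bp_idem N i y).symm]
          group
        unfold psi
        rw [inv_ch_smul N i y, hkel, map_one]
        have hTbb : Tval N f i (bp N i y) (bp N i y) = 1 := by
          unfold Tval
          rw [dif_neg]
          intro hcon
          exact hcon.2.2 rfl
        rw [hTbb, hyx]
        unfold Tval
        rw [dif_pos ⟨h1, h2, h3⟩]
        group
        rfl
      · obtain ⟨e, h1, h2⟩ := e
        subst h2
        set x := ActionCategory.back (M := Monoid.CoprodI G) b with hxdef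
        have e1 : (uncurry F' sane).map (genOf N ⟨i, Sum.inr ⟨e, h1, rfl⟩⟩)
            = psi N f i ((IsFreeGroup.of e : ↥(Kk N i)) : G i) x := by
          show (F' (Monoid.CoprodI.of _)).left x = _
          rw [show F' (Monoid.CoprodI.of ((IsFreeGroup.of e : ↥(Kk N i)) : G i))
              = phi N f i _ from Monoid.CoprodI.lift_of _ _]
          rfl
        rw [e1]
        have hxfix : (Monoid.CoprodI.of ((IsFreeGroup.of e : ↥(Kk N i)) : G i))⁻¹ • x = x := by
          rw [inv_smul_eq_iff]
          exact ((smul_eq_iff_mem N i _ x).mpr (IsFreeGroup.of e).2).symm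
        have hkel : (⟨kel N i ((IsFreeGroup.of e : ↥(Kk N i)) : G i) x, kel_mem N i _ x⟩ :
            ↥(Kk N i)) = IsFreeGroup.of e := by
          refine Subtype.ext ?_
          show kel N i _ x = _
          unfold kel
          rw [hxfix, ch_bp N h1]
          group
        unfold psi
        rw [hxfix, hkel]
        have hbp : bp N i x = x := h1.symm
        have hTW : Tval N f i (bp N i x) x = 1 := by
          rw [hbp]
          unfold Tval
          rw [dif_neg]
          intro hcon
          exact hcon.2.2 rfl
        have hWW : Wval N f i (bp N i x) = Wval N f i x := by rw [hbp]
        rw [hTW, hWW]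
        have hW : Wval N f i x (IsFreeGroup.of e)
            = f (a := obj N x) (b := obj N x) ⟨i, Sum.inr ⟨e, h1, rfl⟩⟩ := by
          unfold Wval
          rw [IsFreeGroup.lift_of, dif_pos h1]
        rw [hW]
        group
        rfl
    refine ⟨uncurry F' sane, hexist, ?_⟩
    intro E hE
    have mapval : ∀ {x x' y : A N} (h : x = x')
        (p : (obj N x) ⟶ (obj N y)) (p' : (obj N x') ⟶ (obj N y)),
        p.val = p'.val → E.map p = E.map p' := by
      intro x x' y h p p' hv
      subst h
      exact congrArg (fun q => E.map q) (Subtype.ext hv)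
    have L0 : ∀ (γ δ : Monoid.CoprodI G) (b : A N),
        (E.map (homOfPair b (γ * δ)) : X)
          = E.map (homOfPair b γ) * E.map (homOfPair (γ⁻¹ • b) δ) := by
      intro γ δ b
      have h1 := congrArg SemidirectProduct.left ((curry E).map_mul γ δ)
      have h2 := congrFun h1 b
      exact h2
    have L1 : ∀ (δ : Monoid.CoprodI G) (b : A N), δ = 1 →
        (E.map (homOfPair b δ) : X) = 1 := by
      intro δ b hδ
      have h := mapval (x := δ⁻¹ • b) (x' := b) (y := b)
        (by rw [hδ]; simp) (homOfPair b δ) (𝟙 (obj N b)) (by rw [hδ]; rfl)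
      exact h.trans (E.map_id _)
    have Linv : ∀ (γ : Monoid.CoprodI G) (b : A N),
        (E.map (homOfPair b γ⁻¹) : X) = (E.map (homOfPair (γ • b) γ))⁻¹ := by
      intro γ b
      have h0 := L0 γ⁻¹ γ b
      rw [L1 _ _ (inv_mul_cancel γ)] at h0
      have h2 : (E.map (homOfPair (γ⁻¹⁻¹ • b) γ) : X) = E.map (homOfPair (γ • b) γ) :=
        congrArg (fun t => (E.map (homOfPair t γ) : X)) (by rw [inv_inv])
      rw [h2] at h0
      exact eq_inv_of_mul_eq_one_left h0.symm
    let EW : ∀ (i : ι) (β : A N), ↥(Kk N i) →* X := fun i β =>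
      { toFun := fun κ => E.map (homOfPair β (Monoid.CoprodI.of (κ : G i))),
        map_one' := by
          show (E.map (homOfPair β (Monoid.CoprodI.of ((1 : ↥(Kk N i)) : G i))) : X) = 1
          exact L1 _ _ (by rw [OneMemClass.coe_one, map_one])
        map_mul' := fun κ κ' => by
          show (E.map (homOfPair β (Monoid.CoprodI.of ((κ * κ' : ↥(Kk N i)) : G i))) : X)
            = E.map (homOfPair β (Monoid.CoprodI.of (κ : G i)))
              * E.map (homOfPair β (Monoid.CoprodI.of (κ' : G i)))
          rw [Subgroup.coe_mul, map_mul, L0]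
          have hpt : (Monoid.CoprodI.of (κ : G i))⁻¹ • β = β := by
            rw [inv_smul_eq_iff]
            exact ((smul_eq_iff_mem N i _ β).mpr κ.2).symm
          exact congrArg (fun z => E.map (homOfPair β (Monoid.CoprodI.of (κ : G i))) * z)
            (congrArg
              (fun t => (E.map (homOfPair t (Monoid.CoprodI.of (κ' : G i))) : X)) hpt) }
    have hEW_W : ∀ (i : ι) (β : A N), β = bp N i β → EW i β = Wval N f i β := by
      intro i β hβ
      refine IsFreeGroup.ext_hom (fun e => ?_)
      have h1 : EW i β (IsFreeGroup.of e)
          = E.map (genOf N (⟨i, Sum.inr ⟨e, hβ, rfl⟩⟩ : Gen N (obj N β) (obj N β))) := by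
        refine mapval ?_ _ _ rfl
        rw [inv_smul_eq_iff]
        exact ((smul_eq_iff_mem N i _ β).mpr (IsFreeGroup.of e).2).symm
      rw [h1]; refine (hE _ _ _).trans ?_
      show _ = Wval N f i β (IsFreeGroup.of e)
      unfold Wval
      rw [IsFreeGroup.lift_of, dif_pos hβ]
    have hT : ∀ (i : ι) (y : A N),
        (E.map (homOfPair y (Monoid.CoprodI.of (ch N i y))) : X) = Tval N f i (bp N i y) y := by
      intro i y
      by_cases hy : y = bp N i y
      · rw [L1 _ _ (by rw [ch_bp N hy, map_one])]
        unfold Tval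
        rw [dif_neg]
        · intro hcon
          exact hcon.2.2 (by rw [← hy])
      · have harrow : E.map (homOfPair y (Monoid.CoprodI.of (ch N i y)))
            = E.map (genOf N (⟨i, Sum.inl ⟨⟨(bp_idem N i y).symm,
                ⟨ch N i y, ch_spec N i y⟩, hy⟩⟩⟩ : Gen N (obj N (bp N i y)) (obj N y))) :=
          mapval (inv_ch_smul N i y) _ _ rfl
        rw [harrow]; refine (hE _ _ _).trans ?_
        show _ = Tval N f i (bp N i y) y
        unfold Tval
        rw [dif_pos ⟨(bp_idem N i y).symm, ⟨ch N i y, ch_spec N i y⟩, hy⟩]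
    have key : ∀ (i : ι) (g : G i) (b : A N),
        (E.map (homOfPair b (Monoid.CoprodI.of g)) : X) = psi N f i g b := by
      intro i g b
      have hdecomp : Monoid.CoprodI.of g = Monoid.CoprodI.of (ch N i b) *
          (Monoid.CoprodI.of (kel N i g b) *
            (Monoid.CoprodI.of (ch N i ((Monoid.CoprodI.of g)⁻¹ • b)))⁻¹) := by
        rw [← map_inv, ← map_mul, ← map_mul]
        congr 1
        unfold kel
        group
      have hpoint : ∀ (γ : Monoid.CoprodI G) {t t' : A N}, t = t' →
          (E.map (homOfPair t γ) : X) = E.map (homOfPair t' γ) := by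
        intro γ t t' h
        subst h
        rfl
      conv_lhs => rw [hdecomp]
      rw [L0, L0]
      have hkb : Monoid.CoprodI.of (kel N i g b) • bp N i b = bp N i b :=
        (smul_eq_iff_mem N i _ _).mpr (kel_mem N i g b)
      have p3 : (Monoid.CoprodI.of (kel N i g b))⁻¹ • bp N i b = bp N i b := by
        rw [inv_smul_eq_iff]
        exact hkb.symm
      have e3 : (Monoid.CoprodI.of (kel N i g b))⁻¹
          • ((Monoid.CoprodI.of (ch N i b))⁻¹ • b) = bp N i b := by
        rw [inv_ch_smul N i b]
        exact p3
      rw [hpoint (Monoid.CoprodI.of (kel N i g b)) (inv_ch_smul N i b)]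
      rw [hpoint ((Monoid.CoprodI.of (ch N i ((Monoid.CoprodI.of g)⁻¹ • b)))⁻¹) e3]
      rw [Linv]
      have hba : bp N i ((Monoid.CoprodI.of g)⁻¹ • b) = bp N i b := bp_inv_smul N i g b
      have p4 : Monoid.CoprodI.of (ch N i ((Monoid.CoprodI.of g)⁻¹ • b)) • bp N i b
          = (Monoid.CoprodI.of g)⁻¹ • b := by
        rw [← hba]
        exact ch_spec N i _
      rw [hpoint (Monoid.CoprodI.of (ch N i ((Monoid.CoprodI.of g)⁻¹ • b))) p4]
      rw [hT i b]
      have hmid : E.map (homOfPair (bp N i b) (Monoid.CoprodI.of (kel N i g b)))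
          = Wval N f i (bp N i b) ⟨kel N i g b, kel_mem N i g b⟩ := by
        have h1 : (E.map (homOfPair (bp N i b) (Monoid.CoprodI.of (kel N i g b))) : X)
            = EW i (bp N i b) ⟨kel N i g b, kel_mem N i g b⟩ := rfl
        rw [h1, hEW_W i (bp N i b) (bp_idem N i b).symm]
      rw [hmid, hT i ((Monoid.CoprodI.of g)⁻¹ • b), hba]
      unfold psi
      group
    have hcurry : curry E = F' := by
      refine Monoid.CoprodI.ext_hom _ _ (fun i => ?_)
      refine MonoidHom.ext (fun g => ?_)
      show curry E (Monoid.CoprodI.of g) = F' (Monoid.CoprodI.of g)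
      rw [show F' (Monoid.CoprodI.of g) = phi N f i g from Monoid.CoprodI.lift_of _ _]
      refine SemidirectProduct.ext ?_ rfl
      funext b
      show (E.map (homOfPair b (Monoid.CoprodI.of g)) : X) = psi N f i g b
      exact key i g b
    apply Functor.hext
    · intro
      apply Unit.ext
    · refine ActionCategory.cases ?_
      intro t g
      apply heq_of_eq
      show (E.map (homOfPair t g) : X) = (F' g).left t
      rw [← hcurry]
      rfl

theorem isFreeGroup_of_normal [∀ i, IsFreeGroup ↥(Kk N i)] : IsFreeGroup ↥N :=
  by
  have e := ActionCategory.endMulEquivSubgroup N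
  let r := obj N ((1 : Monoid.CoprodI G) : A N)
  haveI hc : @IsConnected (ActionCategory (CoprodI G) (A N)) Groupoid.toCategory :=
    zigzag_isConnected fun x y => Relation.ReflTransGen.single <|
      Or.inl <| nonempty_subtype.mpr (show _ from MulAction.exists_smul_eq (CoprodI G) x.back y.back)
  have hfree := IsFreeGroupoid.endIsFreeOfConnectedFree r
  let e' : @MulEquiv (@End (ActionCategory (CoprodI G) (A N)) Groupoid.toCategory.toCategoryStruct r) N
      (End.group r).toDivInvMonoid.toMonoid.toMulOneClass.toMul _ :=
    { toFun := fun f => e f, invFun := fun n => e.symm n, left_inv := e.left_inv,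
      right_inv := e.right_inv, map_mul' := fun x y => by exact map_mul e x y }
  exact IsFreeGroup.ofMulEquiv e'

end FPVF


/-- A free product of finitely many groups, each finite or virtually infinite cyclic, contains
a normal free subgroup of finite index; in particular it is virtually free and contains a
torsion-free normal subgroup of finite index. -/
theorem free_product_virtually_free
    (ι : Type) [Fintype ι] (G : ι → Type) [∀ i, Group (G i)]
    (h : ∀ i, Finite (G i) ∨
      ∃ g : G i, ¬ IsOfFinOrder g ∧ (Subgroup.zpowers g).FiniteIndex) :
    ∃ N : Subgroup (Monoid.CoprodI G), N.Normal ∧ N.FiniteIndex ∧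
      IsFreeGroup N ∧ Monoid.IsTorsionFree N := by
  classical
  have hW : ∀ i, ∃ W : Subgroup (G i), W.Normal ∧ W.FiniteIndex ∧ IsFreeGroup ↥W := by
    intro i
    rcases h i with hfin | ⟨g, hord, hfi⟩
    · exact ⟨⊥, inferInstance, inferInstance, isFreeGroup_bot⟩
    · haveI := hfi
      haveI := isFreeGroup_zpowers hord
      refine ⟨(Subgroup.zpowers g).normalCore, inferInstance, inferInstance, ?_⟩
      exact IsFreeGroup.ofMulEquiv
        (Subgroup.subgroupOfEquivOfLe ((Subgroup.zpowers g).normalCore_le))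
  choose W hWn hWf hWfree using hW
  haveI : ∀ i, (W i).Normal := hWn
  haveI : ∀ i, (W i).FiniteIndex := hWf
  let π : Monoid.CoprodI G →* (∀ i, G i ⧸ W i) :=
    Monoid.CoprodI.lift (fun i => (MonoidHom.mulSingle (fun j => G j ⧸ W j) i).comp
      (QuotientGroup.mk' (W i)))
  have hcomap : ∀ i, FPVF.Kk π.ker i = W i := by
    intro i
    ext x
    rw [Subgroup.mem_comap, MonoidHom.mem_ker, Monoid.CoprodI.lift_of]
    show MonoidHom.mulSingle (fun j => G j ⧸ W j) i (QuotientGroup.mk x) = 1 ↔ x ∈ W i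
    constructor
    · intro hx
      have h2 := congrFun hx i
      simp only [MonoidHom.mulSingle_apply, Pi.mulSingle_eq_same, Pi.one_apply] at h2
      exact (QuotientGroup.eq_one_iff x).mp h2
    · intro hx
      have h2 : (QuotientGroup.mk x : G i ⧸ W i) = 1 := (QuotientGroup.eq_one_iff x).mpr hx
      rw [h2, map_one]
  haveI : ∀ i, IsFreeGroup ↥(FPVF.Kk π.ker i) := by
    intro i
    rw [hcomap i]
    exact hWfree i
  haveI hfree : IsFreeGroup ↥π.ker := FPVF.isFreeGroup_of_normal π.ker
  refine ⟨π.ker, inferInstance, ?_, hfree, isTorsionFree_of_isFreeGroup⟩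
  haveI : Finite (∀ i, G i ⧸ W i) := inferInstance
  haveI : Finite π.range := inferInstance
  infer_instance
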